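/- arXiv:1905.13168 — 4 statements merged into one kernel-verified Lean document; each statement's English description precedes it below -/
import Mathlib

section
/- Let n ≥ 1, let Σ and Σ' be n×n real positive definite matrices, and let X be a random vector in ℝⁿ distributed according to the multivariate Gaussian distribution N(0, Σ'). Let λ₁, …, λₙ be the eigenvalues (with multiplicity) of the symmetric positive definite matrix (Σ')^{1/2} Σ^{-1} (Σ')^{1/2}. Then there exist random variables v₁, …, vₙ and u₁, …, uₙ, each distributed as χ²(1), such that almost surely Xᵀ Σ^{-1} X − Xᵀ (Σ')^{-1} X = ∑_{i=1}^n λᵢ uᵢ − ∑_{i=1}^n vᵢ. -/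
open Matrix MeasureTheory ProbabilityTheory

/-- The square root of a positive semidefinite matrix, with its definition from the older
Mathlib (removed since), specialized to real matrices. -/
noncomputable def Matrix.PosSemidef.sqrt {n : Type*} [Fintype n] [DecidableEq n]
    {A : Matrix n n ℝ} (hA : A.PosSemidef) : Matrix n n ℝ :=
  hA.1.eigenvectorUnitary.1 * diagonal ((↑) ∘ (√·) ∘ hA.1.eigenvalues) *
  (star hA.1.eigenvectorUnitary : Matrix n n ℝ)

lemma Matrix.PosSemidef.isHermitian_sqrt {n : Type*} [Fintype n] [DecidableEq n]
    {A : Matrix n n ℝ} (hA : A.PosSemidef) : hA.sqrt.IsHermitian := by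
  simp only [IsHermitian, Matrix.PosSemidef.sqrt, conjTranspose_mul, diagonal_conjTranspose,
    Matrix.mul_assoc]
  congr 2
  all_goals first | (ext i j; simp [diagonal_apply]) | simp

/-- The chi-squared distribution with one degree of freedom: the law of the square of a
standard normal random variable. -/
noncomputable def chiSqOne : Measure ℝ := (gaussianReal 0 1).map fun x => x ^ 2

/-- The standard multivariate Gaussian `N(0, Iₙ)` on `ℝⁿ`, as the product of `n` standard
real Gaussians. -/
noncomputable def stdGaussianPi (n : ℕ) : Measure (Fin n → ℝ) :=
  Measure.pi fun _ => gaussianReal 0 1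

/-- The multivariate Gaussian `N(0, Σ)` for a positive definite covariance matrix `Σ`,
defined as the law of `Σ^{1/2} Y` with `Y ~ N(0, Iₙ)`. -/
noncomputable def gaussianOfPosDef {n : ℕ} {S : Matrix (Fin n) (Fin n) ℝ} (hS : S.PosDef) :
    Measure (Fin n → ℝ) :=
  (stdGaussianPi n).map fun y => hS.posSemidef.sqrt.mulVec y

/-- For positive definite `Σ'`, `Σ`, the matrix `(Σ')^{1/2} Σ⁻¹ (Σ')^{1/2}` is symmetric. -/
lemma isHermitian_sqrt_mul_inv_mul_sqrt {n : ℕ} {S S' : Matrix (Fin n) (Fin n) ℝ}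
    (hS : S.PosDef) (hS' : S'.PosDef) :
    (hS'.posSemidef.sqrt * S⁻¹ * hS'.posSemidef.sqrt).IsHermitian := by
  have h := Matrix.isHermitian_mul_mul_conjTranspose hS'.posSemidef.sqrt hS.1.inv
  rwa [hS'.posSemidef.isHermitian_sqrt.eq] at h


section Helpers
open scoped ENNReal NNReal Real
open Set

lemma measurable_mulVec {n : ℕ} (A : Matrix (Fin n) (Fin n) ℝ) :
    Measurable (A.mulVec) := by
  apply measurable_pi_lambda
  intro i
  simpa [Matrix.mulVec, dotProduct] using
    Finset.measurable_sum Finset.univ fun j _ => by fun_prop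

lemma lintegral_pi_prod : ∀ {n : ℕ} (μ : Fin n → Measure ℝ) [∀ i, SigmaFinite (μ i)]
    (f : Fin n → ℝ → ℝ≥0∞) (_ : ∀ i, Measurable (f i)),
    ∫⁻ x, ∏ i, f i (x i) ∂Measure.pi μ = ∏ i, ∫⁻ t, f i t ∂μ i := by
  intro n
  induction n with
  | zero =>
    intro μ _ f hf
    simp [Measure.pi_of_empty]
  | succ n ih =>
    intro μ _ f hf
    have hmp := (measurePreserving_piFinSuccAbove μ 0).symm
    rw [← hmp.map_eq, lintegral_map ?m1 ?m2]
    case m1 =>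
      exact Finset.measurable_prod Finset.univ fun i _ => (hf i).comp (measurable_pi_apply i)
    case m2 => exact (MeasurableEquiv.piFinSuccAbove (fun _ => ℝ) 0).symm.measurable
    have heq : ∀ p : ℝ × (Fin n → ℝ),
        (∏ i, f i (((MeasurableEquiv.piFinSuccAbove (fun _ => ℝ) 0).symm p) i))
          = f 0 p.1 * ∏ i, f i.succ (p.2 i) := by
      intro p
      rw [Fin.prod_univ_succ]
      congr 1
    simp_rw [heq, Fin.succAbove_zero]
    have hpm := lintegral_prod_mul (μ := μ 0) (ν := Measure.pi fun j : Fin n => μ j.succ)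
      (f := f 0) (g := fun z : Fin n → ℝ => ∏ i : Fin n, f i.succ (z i))
      ((hf 0).aemeasurable)
      ((Finset.measurable_prod Finset.univ fun i _ =>
        (hf i.succ).comp (measurable_pi_apply i)).aemeasurable)
    rw [hpm, ih (fun i => μ i.succ) (fun i => f i.succ) (fun i => hf i.succ),
      Fin.prod_univ_succ]

lemma stdGaussianPi_withDensity (n : ℕ) :
    stdGaussianPi n = (volume : Measure (Fin n → ℝ)).withDensity
      (fun x => ∏ i, gaussianPDF 0 1 (x i)) := by
  rw [stdGaussianPi]
  refine Measure.pi_eq (μ := fun _ : Fin n => gaussianReal 0 1) fun s hs => ?_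
  rw [withDensity_apply _ (MeasurableSet.univ_pi hs), ← lintegral_indicator
    (MeasurableSet.univ_pi hs)]
  have hind : ∀ x : Fin n → ℝ,
      (Set.univ.pi s).indicator (fun x => ∏ i, gaussianPDF 0 1 (x i)) x
        = ∏ i, (s i).indicator (gaussianPDF 0 1) (x i) := by
    intro x
    by_cases hx : x ∈ Set.univ.pi s
    · rw [Set.indicator_of_mem hx]
      exact Finset.prod_congr rfl fun i _ =>
        (Set.indicator_of_mem (hx i (Set.mem_univ i)) _).symm
    · rw [Set.indicator_of_notMem hx]
      rw [Set.mem_univ_pi] at hx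
      push_neg at hx
      obtain ⟨i, hi⟩ := hx
      exact (Finset.prod_eq_zero (Finset.mem_univ i)
        (by rw [Set.indicator_of_notMem hi])).symm
  simp_rw [hind]
  rw [MeasureTheory.volume_pi, lintegral_pi_prod (fun _ : Fin n => (volume : Measure ℝ)) _
    (fun i => (measurable_gaussianPDF 0 1).indicator (hs i))]
  refine Finset.prod_congr rfl fun i _ => ?_
  rw [lintegral_indicator (hs i), gaussianReal_of_var_ne_zero 0 one_ne_zero,
    withDensity_apply _ (hs i)]

lemma prod_gaussianPDF_eq {n : ℕ} (x : Fin n → ℝ) :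
    ∏ i, gaussianPDF 0 1 (x i)
      = ENNReal.ofReal ((Real.sqrt (2 * Real.pi))⁻¹ ^ n
          * Real.exp (-(∑ i, x i ^ 2) / 2)) := by
  simp_rw [gaussianPDF]
  rw [← ENNReal.ofReal_prod_of_nonneg (fun i _ => gaussianPDFReal_nonneg 0 1 (x i))]
  congr 1
  simp only [gaussianPDFReal, NNReal.coe_one, mul_one, sub_zero]
  rw [Finset.prod_mul_distrib, Finset.prod_const, ← Real.exp_sum, Finset.card_univ,
    Fintype.card_fin]
  congr 1
  rw [← Finset.sum_div, Finset.sum_neg_distrib, neg_div]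

lemma sum_sq_mulVec_eq {n : ℕ} {A : Matrix (Fin n) (Fin n) ℝ} (hA : Aᵀ * A = 1)
    (x : Fin n → ℝ) : ∑ i, (A.mulVec x i) ^ 2 = ∑ i, x i ^ 2 := by
  have h : A.mulVec x ⬝ᵥ A.mulVec x = x ⬝ᵥ x := by
    rw [Matrix.dotProduct_mulVec, ← Matrix.mulVec_transpose, Matrix.mulVec_mulVec, hA,
      Matrix.one_mulVec]
  simpa [dotProduct, pow_two] using h

lemma stdGaussianPi_map_orthogonal {n : ℕ} {A : Matrix (Fin n) (Fin n) ℝ}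
    (hA : Aᵀ * A = 1) :
    (stdGaussianPi n).map (A.mulVec) = stdGaussianPi n := by
  have hdet2 : det A * det A = 1 := by
    have := congrArg Matrix.det hA
    rwa [Matrix.det_mul, Matrix.det_transpose, Matrix.det_one] at this
  have hdet_ne : det A ≠ 0 := by
    intro h; rw [h, mul_zero] at hdet2; exact zero_ne_one hdet2
  have habs : |det A| = 1 := by
    have h1 : |det A| ^ 2 = 1 := by rw [sq_abs, pow_two, hdet2]
    nlinarith [abs_nonneg (det A)]
  have hvol : Measure.map (A.mulVec) (volume : Measure (Fin n → ℝ)) = volume := by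
    have h := Real.map_matrix_volume_pi_eq_smul_volume_pi (M := A) hdet_ne
    have hfun : ⇑(Matrix.toLin' A) = A.mulVec := funext fun v => Matrix.toLin'_apply A v
    rw [hfun] at h
    rw [h, abs_inv, habs]
    norm_num
  have hGm : Measurable (fun x : Fin n → ℝ => ∏ i, gaussianPDF 0 1 (x i)) :=
    Finset.measurable_prod Finset.univ fun i _ =>
      (measurable_gaussianPDF 0 1).comp (measurable_pi_apply i)
  ext s hs
  rw [Measure.map_apply (measurable_mulVec A) hs, stdGaussianPi_withDensity,
    withDensity_apply _ ((measurable_mulVec A) hs), withDensity_apply _ hs]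
  calc ∫⁻ x in A.mulVec ⁻¹' s, ∏ i, gaussianPDF 0 1 (x i) ∂volume
      = ∫⁻ x in A.mulVec ⁻¹' s, ∏ i, gaussianPDF 0 1 (A.mulVec x i) ∂volume := by
        refine setLIntegral_congr_fun ((measurable_mulVec A) hs) (
          fun x _ => ?_)
        rw [prod_gaussianPDF_eq, prod_gaussianPDF_eq, sum_sq_mulVec_eq hA]
    _ = ∫⁻ y in s, ∏ i, gaussianPDF 0 1 (y i) ∂volume := by
        rw [← setLIntegral_map hs hGm (measurable_mulVec A), hvol]

lemma stdGaussianPi_map_eval {n : ℕ} (i : Fin n) :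
    (stdGaussianPi n).map (fun x => x i) = gaussianReal 0 1 := by
  ext s hs
  rw [Measure.map_apply (measurable_pi_apply i) hs, stdGaussianPi,
    show (fun x : Fin n → ℝ => x i) = Function.eval i from rfl,
    ← Set.univ_pi_update_univ, Measure.pi_pi]
  rw [Finset.prod_eq_single_of_mem i (Finset.mem_univ i)
    (fun j _ hj => by simp [Function.update_of_ne hj])]
  simp

lemma map_sq_chiSq {Ω : Type*} [MeasurableSpace Ω] {P : Measure Ω} {W : Ω → ℝ}
    (hWm : Measurable W) (hW : P.map W = gaussianReal 0 1) :
    P.map (fun ω => (W ω) ^ 2) = chiSqOne := by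
  have hsq : Measurable fun t : ℝ => t ^ 2 := measurable_id.pow_const 2
  rw [show (fun ω => (W ω) ^ 2) = (fun t : ℝ => t ^ 2) ∘ W from rfl,
    ← Measure.map_map hsq hWm, hW, chiSqOne]

lemma dot_mulVec_conj {n : ℕ} (A B : Matrix (Fin n) (Fin n) ℝ) (z : Fin n → ℝ) :
    (A.mulVec z) ⬝ᵥ B.mulVec (A.mulVec z) = z ⬝ᵥ (Aᵀ * B * A).mulVec z := by
  rw [Matrix.dotProduct_mulVec, Matrix.dotProduct_mulVec, Matrix.vecMul_vecMul,
    ← Matrix.vecMul_transpose, Matrix.vecMul_vecMul,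
    Matrix.dotProduct_mulVec z (Aᵀ * B * A) z, Matrix.mul_assoc]

end Helpers

/-- **Theorem 2 of the paper.** Under the alternative hypothesis, i.e. `X ~ N(0, Σ')`, the
quadratic-form part of the generalized likelihood ratio decomposes as
`XᵀΣ⁻¹X − Xᵀ(Σ')⁻¹X = ∑ᵢ λᵢ uᵢ − ∑ᵢ vᵢ` almost surely, where `λ₁, …, λₙ` are the
eigenvalues of `(Σ')^{1/2} Σ⁻¹ (Σ')^{1/2}` and the `uᵢ, vᵢ` are `χ²(1)`-distributed. -/
theorem glrt_decomposition_alternative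
    {Ω : Type*} [MeasurableSpace Ω] (P : Measure Ω) [IsProbabilityMeasure P]
    {n : ℕ} (hn : 1 ≤ n) (S S' : Matrix (Fin n) (Fin n) ℝ)
    (hS : S.PosDef) (hS' : S'.PosDef)
    (X : Ω → Fin n → ℝ) (hX : Measurable X)
    (hXdist : P.map X = gaussianOfPosDef hS') :
    ∃ v u : Fin n → Ω → ℝ,
      (∀ i, P.map (v i) = chiSqOne) ∧ (∀ i, P.map (u i) = chiSqOne) ∧
      ∀ᵐ ω ∂P,
        X ω ⬝ᵥ S⁻¹.mulVec (X ω) - X ω ⬝ᵥ S'⁻¹.mulVec (X ω)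
          = ∑ i, (isHermitian_sqrt_mul_inv_mul_sqrt hS hS').eigenvalues i * u i ω
            - ∑ i, v i ω := by
  classical
  set Q : Matrix (Fin n) (Fin n) ℝ := hS'.posSemidef.sqrt with hQdef
  have hM : (Q * S⁻¹ * Q).IsHermitian := isHermitian_sqrt_mul_inv_mul_sqrt hS hS'
  have hQherm : Qᵀ = Q := by
    have := hS'.posSemidef.isHermitian_sqrt.eq
    rwa [Matrix.conjTranspose_eq_transpose_of_trivial] at this
  have hQQ : Q * Q = S' := by
    have hsp := hS'.posSemidef.1.spectral_theorem
    rw [RCLike.ofReal_real_eq_id, Function.id_comp, Unitary.conjStarAlgAut_apply] at hsp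
    conv_rhs => rw [hsp]
    rw [hQdef, Matrix.PosSemidef.sqrt]
    have hVV := Unitary.coe_star_mul_self hS'.posSemidef.1.eigenvectorUnitary
    have hD : diagonal ((↑) ∘ (√·) ∘ hS'.posSemidef.1.eigenvalues) *
        diagonal ((↑) ∘ (√·) ∘ hS'.posSemidef.1.eigenvalues)
          = diagonal hS'.posSemidef.1.eigenvalues := by
      rw [diagonal_mul_diagonal]
      congr 1
      funext i
      simp [Real.mul_self_sqrt (hS'.posSemidef.eigenvalues_nonneg i)]
    simp only [Matrix.mul_assoc]
    rw [← Matrix.mul_assoc (star _) (_ : Matrix (Fin n) (Fin n) ℝ), hVV, Matrix.one_mul,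
      ← Matrix.mul_assoc (diagonal _) (diagonal _), hD]
  have hdetQ : IsUnit Q.det := by
    refine isUnit_iff_ne_zero.mpr fun h => hS'.det_pos.ne' ?_
    rw [← hQQ, Matrix.det_mul, h, mul_zero]
  have hQinv : Q⁻¹ * Q = 1 := Matrix.nonsing_inv_mul _ hdetQ
  have hQinv' : Q * Q⁻¹ = 1 := Matrix.mul_nonsing_inv _ hdetQ
  -- the standardized vector
  set Z : Ω → Fin n → ℝ := fun ω => Q⁻¹.mulVec (X ω) with hZdef
  have hZm : Measurable Z := (measurable_mulVec _).comp hX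
  have hZX : ∀ ω, Q.mulVec (Z ω) = X ω := fun ω => by
    rw [hZdef, Matrix.mulVec_mulVec, hQinv', Matrix.one_mulVec]
  have hZdist : P.map Z = stdGaussianPi n := by
    rw [show Z = (Q⁻¹.mulVec) ∘ X from rfl, ← Measure.map_map (measurable_mulVec _) hX,
      hXdist, gaussianOfPosDef, Measure.map_map (measurable_mulVec _) (measurable_mulVec _)]
    have hcomp : (Q⁻¹.mulVec) ∘ (fun y => Q.mulVec y) = id := by
      funext y
      simp [Matrix.mulVec_mulVec, hQinv, Matrix.one_mulVec]
    rw [hcomp, Measure.map_id]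
  -- spectral data
  set U : Matrix (Fin n) (Fin n) ℝ := (hM.eigenvectorUnitary : Matrix (Fin n) (Fin n) ℝ)
    with hUdef
  have hUstar : star U = Uᵀ := by
    rw [Matrix.star_eq_conjTranspose, Matrix.conjTranspose_eq_transpose_of_trivial]
  have hUU : star U * U = 1 := by
    rw [hUdef]; exact Unitary.coe_star_mul_self hM.eigenvectorUnitary
  have hUU' : U * star U = 1 := by
    rw [hUdef]; exact Unitary.coe_mul_star_self hM.eigenvectorUnitary
  have hUorth : (Uᵀ)ᵀ * Uᵀ = 1 := by
    rw [Matrix.transpose_transpose, ← hUstar, hUU']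
  -- the rotated vector
  set W : Ω → Fin n → ℝ := fun ω => Uᵀ.mulVec (Z ω) with hWdef
  have hWm : Measurable W := (measurable_mulVec _).comp hZm
  have hWdist : P.map W = stdGaussianPi n := by
    rw [show W = (Uᵀ.mulVec) ∘ Z from rfl, ← Measure.map_map (measurable_mulVec _) hZm,
      hZdist, stdGaussianPi_map_orthogonal hUorth]
  refine ⟨fun i ω => (Z ω i) ^ 2, fun i ω => (W ω i) ^ 2, ?_, ?_, ?_⟩
  · intro i
    refine map_sq_chiSq ((measurable_pi_apply i).comp hZm) ?_
    rw [show (fun ω => Z ω i) = (fun x : Fin n → ℝ => x i) ∘ Z from rfl,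
      ← Measure.map_map (measurable_pi_apply i) hZm, hZdist, stdGaussianPi_map_eval]
  · intro i
    refine map_sq_chiSq ((measurable_pi_apply i).comp hWm) ?_
    rw [show (fun ω => W ω i) = (fun x : Fin n → ℝ => x i) ∘ W from rfl,
      ← Measure.map_map (measurable_pi_apply i) hWm, hWdist, stdGaussianPi_map_eval]
  · refine Filter.Eventually.of_forall fun ω => ?_
    have h1 : X ω ⬝ᵥ S⁻¹.mulVec (X ω)
        = ∑ i, hM.eigenvalues i * (W ω i) ^ 2 := by
      rw [← hZX ω, dot_mulVec_conj, hQherm]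
      have hspec := hM.spectral_theorem
      rw [RCLike.ofReal_real_eq_id, Function.id_comp, Unitary.conjStarAlgAut_apply] at hspec
      conv_lhs => rw [hspec, hUstar]
      rw [show (U * Matrix.diagonal hM.eigenvalues * Uᵀ)
          = U * (Matrix.diagonal hM.eigenvalues * Uᵀ) from by rw [Matrix.mul_assoc]]
      rw [← Matrix.mulVec_mulVec, Matrix.dotProduct_mulVec (Z ω) U,
        ← Matrix.mulVec_transpose, ← Matrix.mulVec_mulVec]
      rw [show Uᵀ.mulVec (Z ω) = W ω from rfl]
      simp only [dotProduct, Matrix.mulVec_diagonal]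
      exact Finset.sum_congr rfl fun i _ => by ring
    have h2 : X ω ⬝ᵥ S'⁻¹.mulVec (X ω) = ∑ i, (Z ω i) ^ 2 := by
      rw [← hZX ω, dot_mulVec_conj, hQherm, ← hQQ, Matrix.mul_inv_rev]
      rw [show Q * (Q⁻¹ * Q⁻¹) * Q = (Q * Q⁻¹) * (Q⁻¹ * Q) from by
          simp only [Matrix.mul_assoc],
        hQinv, hQinv', Matrix.one_mul, Matrix.one_mulVec]
      simp only [dotProduct]
      exact Finset.sum_congr rfl fun i _ => by ring
    rw [h1, h2]
end

section
/- Let n ≥ 1, let Σ and Σ' be n×n real positive definite matrices, let V > 0, and let X be a random vector in ℝⁿ such that almost surely X_i ∈ [−V, V] for all i ∈ {1, …, n}. Let Q = Xᵀ(Σ^{-1} − (Σ')^{-1})X and C = 1/λ_min(Σ) + 1/λ_min(Σ'). Then Q − E[Q] is (C V² n / 2)-subgaussian, i.e., E[exp(s(Q − E[Q]))] ≤ exp(s² (C V² n / 2)² / 2) for all s ∈ ℝ. -/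
open Matrix MeasureTheory

/-- The smallest eigenvalue of a real symmetric matrix, as the infimum of its spectrum. -/
noncomputable def lamMin {n : ℕ} (M : Matrix (Fin n) (Fin n) ℝ) : ℝ := sInf (spectrum ℝ M)

lemma lamMin_le_of_mem {n : ℕ} {M : Matrix (Fin n) (Fin n) ℝ} (hM : M.IsHermitian)
    {x : ℝ} (hx : x ∈ spectrum ℝ M) : lamMin M ≤ x := by
  apply csInf_le _ hx
  rw [hM.spectrum_real_eq_range_eigenvalues]
  exact (Set.finite_range _).bddBelow

lemma lamMin_pos {n : ℕ} (hn : 1 ≤ n) {M : Matrix (Fin n) (Fin n) ℝ} (hM : M.PosDef) :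
    0 < lamMin M := by
  have h : Nonempty (Fin n) := ⟨⟨0, hn⟩⟩
  have hspec := hM.1.spectrum_real_eq_range_eigenvalues
  have hne : (spectrum ℝ M).Nonempty := by
    rw [hspec]; exact Set.range_nonempty _
  have hfin : (spectrum ℝ M).Finite := by rw [hspec]; exact Set.finite_range _
  have := hne.csInf_mem hfin
  rw [hspec] at this
  obtain ⟨i, hi⟩ := this
  rw [lamMin, hspec, ← hi]
  exact hM.eigenvalues_pos i

lemma inv_eig_le {n : ℕ} (hn : 1 ≤ n) {S : Matrix (Fin n) (Fin n) ℝ} (hS : S.PosDef) (i : Fin n) :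
    (hS.inv.1.eigenvalues i) ≤ 1 / lamMin S := by
  set μ := hS.inv.1.eigenvalues i with hμdef
  have hμpos : 0 < μ := hS.inv.eigenvalues_pos i
  have hlampos : 0 < lamMin S := lamMin_pos hn hS
  set v : Fin n → ℝ := ⇑(hS.inv.1.eigenvectorBasis i) with hv
  have hvne : v ≠ 0 := by
    intro h
    apply (hS.inv.1.eigenvectorBasis).orthonormal.ne_zero i
    ext j
    exact congrFun h j
  have hmul : S⁻¹ *ᵥ v = μ • v := hS.inv.1.mulVec_eigenvectorBasis i
  have hSinv : S * S⁻¹ = 1 := mul_nonsing_inv S (isUnit_iff_ne_zero.mpr hS.det_pos.ne')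
  have hSv : S *ᵥ v = μ⁻¹ • v := by
    have h1 : μ • (S *ᵥ v) = v := by
      rw [← mulVec_smul, ← hmul, mulVec_mulVec, hSinv, one_mulVec]
    calc S *ᵥ v = μ⁻¹ • (μ • (S *ᵥ v)) := by
          rw [smul_smul, inv_mul_cancel₀ hμpos.ne', one_smul]
      _ = μ⁻¹ • v := by rw [h1]
  have hmem : μ⁻¹ ∈ spectrum ℝ S := by
    rw [spectrum.mem_iff]
    intro hunit
    rw [Matrix.isUnit_iff_isUnit_det] at hunit
    have hdet : (algebraMap ℝ (Matrix (Fin n) (Fin n) ℝ) μ⁻¹ - S).det = 0 := by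
      rw [← Matrix.exists_mulVec_eq_zero_iff]
      refine ⟨v, hvne, ?_⟩
      rw [sub_mulVec, hSv]
      have : algebraMap ℝ (Matrix (Fin n) (Fin n) ℝ) μ⁻¹ *ᵥ v = μ⁻¹ • v := by
        rw [Algebra.algebraMap_eq_smul_one, smul_mulVec, one_mulVec]
      rw [this, sub_self]
    rw [hdet] at hunit
    exact (not_isUnit_zero : ¬ IsUnit (0:ℝ)) hunit
  have h1 : lamMin S ≤ μ⁻¹ := lamMin_le_of_mem hS.1 hmem
  rw [one_div, ← inv_inv μ]
  gcongr

lemma quad_inv_nonneg {n : ℕ} {S : Matrix (Fin n) (Fin n) ℝ} (hS : S.PosDef)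
    (x : Fin n → ℝ) : 0 ≤ x ⬝ᵥ S⁻¹ *ᵥ x := by
  have := hS.inv.posSemidef.dotProduct_mulVec_nonneg x
  simpa using this

lemma quad_inv_le {n : ℕ} (hn : 1 ≤ n) {S : Matrix (Fin n) (Fin n) ℝ} (hS : S.PosDef)
    (x : Fin n → ℝ) : x ⬝ᵥ S⁻¹ *ᵥ x ≤ (1 / lamMin S) * (x ⬝ᵥ x) := by
  classical
  have hH := hS.inv.1
  set U : Matrix (Fin n) (Fin n) ℝ := (hH.eigenvectorUnitary : Matrix (Fin n) (Fin n) ℝ) with hU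
  set d : Fin n → ℝ := hH.eigenvalues with hd
  set y : Fin n → ℝ := star U *ᵥ x with hy
  have hUmem := hH.eigenvectorUnitary.2
  have hUU : U * star U = 1 := (Matrix.mem_unitaryGroup_iff).mp hUmem
  have hspec : S⁻¹ = U * diagonal d * star U := by
    have := hH.spectral_theorem
    simpa using this
  have hvecmul : x ᵥ* U = y := by
    ext j
    simp [hy, vecMul, mulVec, dotProduct, star, mul_comm]
  have key : x ⬝ᵥ S⁻¹ *ᵥ x = ∑ i, d i * (y i)^2 := by
    rw [hspec, ← mulVec_mulVec, ← mulVec_mulVec, dotProduct_mulVec, hvecmul]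
    simp only [dotProduct, mulVec_diagonal]
    exact Finset.sum_congr rfl (fun i _ => by ring)
  have hnorm : ∑ i, (y i)^2 = x ⬝ᵥ x := by
    have hstar : star U = Uᵀ := U.conjTranspose_eq_transpose_of_trivial
    have h1 : y ⬝ᵥ y = x ⬝ᵥ ((U * star U) *ᵥ x) := by
      conv_lhs => rw [hy, hstar, mulVec_transpose]
      rw [← dotProduct_mulVec, ← mulVec_transpose, ← hstar, mulVec_mulVec]
    rw [hUU, one_mulVec] at h1
    rw [← h1]
    simp [dotProduct, pow_two]
  rw [key, ← hnorm, Finset.mul_sum]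
  apply Finset.sum_le_sum
  intro i _
  have hle : d i ≤ 1 / lamMin S := inv_eig_le hn hS i
  have : (0:ℝ) ≤ (y i)^2 := sq_nonneg _
  nlinarith

section Hoeffding
noncomputable def hg (p t : ℝ) : ℝ := 1 - p + p * Real.exp (-t)
noncomputable def hf (p t : ℝ) : ℝ := t * p + Real.log (hg p t)
noncomputable def hf' (p t : ℝ) : ℝ := p - p * Real.exp (-t) / hg p t

lemma hg_pos {p : ℝ} (hp : 0 ≤ p) (hp1 : p ≤ 1) (t : ℝ) : 0 < hg p t := by
  rcases eq_or_lt_of_le hp1 with h | h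
  · subst h; simp [hg, Real.exp_pos]
  · have := mul_nonneg hp (Real.exp_pos (-t)).le
    unfold hg; linarith

lemma hasDerivAt_hg (p t : ℝ) : HasDerivAt (hg p) (-(p * Real.exp (-t))) t := by
  have h : HasDerivAt (fun t : ℝ => Real.exp (-t)) (-Real.exp (-t)) t := by
    have := (Real.hasDerivAt_exp (-t)).comp t (hasDerivAt_neg t)
    exact this.congr_deriv (by ring)
  have := (h.const_mul p).const_add (1 - p)
  exact this.congr_deriv (by ring)

lemma hasDerivAt_hf {p : ℝ} (hp : 0 ≤ p) (hp1 : p ≤ 1) (t : ℝ) :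
    HasDerivAt (hf p) (hf' p t) t := by
  have h1 : HasDerivAt (fun t : ℝ => t * p) p t := by
    simpa using (hasDerivAt_id t).mul_const p
  have h2 := (hasDerivAt_hg p t).log (hg_pos hp hp1 t).ne'
  have := h1.add h2
  refine this.congr_deriv ?_
  unfold hf'
  ring

lemma hasDerivAt_hf' {p : ℝ} (hp : 0 ≤ p) (hp1 : p ≤ 1) (t : ℝ) :
    HasDerivAt (hf' p)
      ((p * Real.exp (-t) / hg p t) * (1 - p * Real.exp (-t) / hg p t)) t := by
  have he : HasDerivAt (fun t : ℝ => p * Real.exp (-t)) (-(p * Real.exp (-t))) t := by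
    have h : HasDerivAt (fun t : ℝ => Real.exp (-t)) (-Real.exp (-t)) t := by
      have := (Real.hasDerivAt_exp (-t)).comp t (hasDerivAt_neg t)
      exact this.congr_deriv (by ring)
    exact (h.const_mul p).congr_deriv (by ring)
  have hq := he.div (hasDerivAt_hg p t) (hg_pos hp hp1 t).ne'
  have := hq.const_sub p
  have hgpos := hg_pos hp hp1 t
  refine this.congr_deriv ?_
  field_simp
  ring

lemma hf'_sq_bound {p : ℝ} (hp : 0 ≤ p) (hp1 : p ≤ 1) (t : ℝ) :
    0 ≤ (p * Real.exp (-t) / hg p t) * (1 - p * Real.exp (-t) / hg p t) ∧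
    (p * Real.exp (-t) / hg p t) * (1 - p * Real.exp (-t) / hg p t) ≤ 1/4 := by
  have hgpos := hg_pos hp hp1 t
  set u := p * Real.exp (-t) / hg p t with hu
  have hu0 : 0 ≤ u := div_nonneg (mul_nonneg hp (Real.exp_pos _).le) hgpos.le
  have hu1 : u ≤ 1 := by
    rw [hu, div_le_one hgpos]
    unfold hg; linarith
  constructor
  · nlinarith
  · nlinarith [sq_nonneg (u - 1/2)]

lemma hf'_zero (p : ℝ) : hf' p 0 = 0 := by unfold hf' hg; norm_num

lemma abs_hf'_le {p : ℝ} (hp : 0 ≤ p) (hp1 : p ≤ 1) (t : ℝ) : |hf' p t| ≤ |t| / 4 := by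
  have key :=
    (convex_univ : Convex ℝ (Set.univ : Set ℝ)).norm_image_sub_le_of_norm_hasDerivWithin_le
      (f := hf' p)
      (fun x _ => (hasDerivAt_hf' hp hp1 x).hasDerivWithinAt)
      (C := 1/4)
      (fun x _ => by
        rw [Real.norm_eq_abs, abs_of_nonneg (hf'_sq_bound hp hp1 x).1]
        exact (hf'_sq_bound hp hp1 x).2)
      (Set.mem_univ 0) (Set.mem_univ t)
  rw [hf'_zero, sub_zero, sub_zero, Real.norm_eq_abs, Real.norm_eq_abs] at key
  linarith

lemma hf_zero (p : ℝ) : hf p 0 = 0 := by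
  unfold hf hg; norm_num

lemma hf_le {p : ℝ} (hp : 0 ≤ p) (hp1 : p ≤ 1) (t : ℝ) : hf p t ≤ t^2 / 8 := by
  have hcont : Continuous (hf' p) :=
    continuous_iff_continuousAt.mpr (fun x => (hasDerivAt_hf' hp hp1 x).continuousAt)
  have hftc : ∀ a b : ℝ, ∫ x in a..b, hf' p x = hf p b - hf p a := fun a b =>
    intervalIntegral.integral_eq_sub_of_hasDerivAt
      (fun x _ => hasDerivAt_hf hp hp1 x) (hcont.intervalIntegrable a b)
  have hid : ∀ a b : ℝ, ∫ x in a..b, x / 4 = (b^2 - a^2) / 8 := by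
    intro a b
    rw [intervalIntegral.integral_div, integral_id]
    ring
  rcases le_total 0 t with ht | ht
  · have hmono := intervalIntegral.integral_mono_on (μ := MeasureTheory.volume) ht
      (hcont.intervalIntegrable 0 t)
      ((continuous_id.div_const 4).intervalIntegrable 0 t)
      (fun x hx => by
        have h := abs_hf'_le hp hp1 x
        rw [abs_of_nonneg hx.1] at h
        calc hf' p x ≤ |hf' p x| := le_abs_self _
          _ ≤ x / 4 := h)
    simp only [id_eq] at hmono
    rw [hftc 0 t, hf_zero, sub_zero, hid 0 t] at hmono
    linarith
  · have hmono := intervalIntegral.integral_mono_on (μ := MeasureTheory.volume) ht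
      ((continuous_id.div_const 4).intervalIntegrable t 0)
      (hcont.intervalIntegrable t 0)
      (fun x hx => by
        have h := abs_hf'_le hp hp1 x
        rw [abs_of_nonpos hx.2] at h
        calc x / 4 = -(-x / 4) := by ring
          _ ≤ -|hf' p x| := by linarith
          _ ≤ hf' p x := neg_abs_le _)
    simp only [id_eq] at hmono
    rw [hftc t 0, hf_zero, zero_sub, hid t 0] at hmono
    linarith

lemma hoeffding_core {p : ℝ} (hp : 0 ≤ p) (hp1 : p ≤ 1) (t : ℝ) :
    (1 - p) * Real.exp (t * p) + p * Real.exp (-t * (1 - p)) ≤ Real.exp (t^2 / 8) := by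
  have h1 : (1 - p) * Real.exp (t * p) + p * Real.exp (-t * (1 - p)) = Real.exp (hf p t) := by
    unfold hf
    rw [Real.exp_add, Real.exp_log (hg_pos hp hp1 t)]
    unfold hg
    have h2 : Real.exp (-t * (1 - p)) = Real.exp (t * p) * Real.exp (-t) := by
      rw [← Real.exp_add]; ring_nf
    rw [h2]; ring
  rw [h1]
  exact Real.exp_le_exp.mpr (hf_le hp hp1 t)

lemma hoeffding_mgf {Ω : Type*} [MeasurableSpace Ω] (P : Measure Ω) [IsProbabilityMeasure P]
    {Y : Ω → ℝ} (hY : Measurable Y) {a b : ℝ} (hab : a < b)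
    (hbdd : ∀ᵐ ω ∂P, Y ω ∈ Set.Icc a b) (s : ℝ) :
    ∫ ω, Real.exp (s * (Y ω - ∫ ω', Y ω' ∂P)) ∂P ≤ Real.exp (s^2 * (b - a)^2 / 8) := by
  have hba : (0:ℝ) < b - a := by linarith
  -- integrability of Y
  have hYint : Integrable Y P := by
    refine (integrable_const (max |a| |b|)).mono' hY.aestronglyMeasurable ?_
    filter_upwards [hbdd] with ω hω
    rw [Real.norm_eq_abs]
    rcases abs_cases (Y ω) with ⟨h1, _⟩ | ⟨h1, _⟩
    · rw [h1]; exact le_max_of_le_right (le_trans hω.2 (le_abs_self b))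
    · rw [h1]; exact le_max_of_le_left (by cases abs_cases a with
        | inl h => linarith [hω.1, h.1]
        | inr h => linarith [hω.1, h.1])
  set μ : ℝ := ∫ ω', Y ω' ∂P with hμ
  have hμa : a ≤ μ := by
    have : ∫ _ω' , a ∂P ≤ μ := by
      apply integral_mono_ae (integrable_const a) hYint
      filter_upwards [hbdd] with ω hω using hω.1
    simpa using this
  have hμb : μ ≤ b := by
    have : μ ≤ ∫ _ω', b ∂P := by
      apply integral_mono_ae hYint (integrable_const b)
      filter_upwards [hbdd] with ω hω using hω.2
    simpa using this
  set p : ℝ := (μ - a) / (b - a) with hp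
  have hp0 : 0 ≤ p := div_nonneg (by linarith) hba.le
  have hp1 : p ≤ 1 := by rw [hp, div_le_one hba]; linarith
  set c2 : ℝ := (Real.exp (s * (b - μ)) - Real.exp (s * (a - μ))) / (b - a) with hc2
  set c1 : ℝ := (b * Real.exp (s * (a - μ)) - a * Real.exp (s * (b - μ))) / (b - a) with hc1
  -- pointwise convexity bound
  have hpt : ∀ᵐ ω ∂P, Real.exp (s * (Y ω - μ)) ≤ c1 + c2 * Y ω := by
    filter_upwards [hbdd] with ω hω
    have key := convexOn_exp.2 (Set.mem_univ (s * (a - μ))) (Set.mem_univ (s * (b - μ)))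
      (show (0:ℝ) ≤ (b - Y ω) / (b - a) from div_nonneg (by linarith [hω.2]) hba.le)
      (show (0:ℝ) ≤ (Y ω - a) / (b - a) from div_nonneg (by linarith [hω.1]) hba.le)
      (by field_simp; ring)
    have heq : ((b - Y ω) / (b - a)) • (s * (a - μ)) + ((Y ω - a) / (b - a)) • (s * (b - μ))
        = s * (Y ω - μ) := by
      rw [smul_eq_mul, smul_eq_mul]
      field_simp
      ring
    rw [heq] at key
    calc Real.exp (s * (Y ω - μ))
        ≤ ((b - Y ω) / (b - a)) • Real.exp (s * (a - μ))
          + ((Y ω - a) / (b - a)) • Real.exp (s * (b - μ)) := key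
      _ = c1 + c2 * Y ω := by
          rw [smul_eq_mul, smul_eq_mul, hc1, hc2]
          field_simp
          ring
  -- integrability of exp term
  have hexpint : Integrable (fun ω => Real.exp (s * (Y ω - μ))) P := by
    refine (integrable_const (Real.exp (|s| * (|a| + |b| + |μ|)))).mono'
      (Real.measurable_exp.comp ((hY.sub measurable_const).const_mul s)).aestronglyMeasurable ?_
    filter_upwards [hbdd] with ω hω
    rw [Real.norm_eq_abs, abs_of_pos (Real.exp_pos _)]
    apply Real.exp_le_exp.mpr
    have h1 : |Y ω| ≤ |a| + |b| := by
      rcases abs_cases (Y ω) with ⟨h, _⟩ | ⟨h, _⟩ <;> rcases abs_cases a with ⟨ha', _⟩ | ⟨ha', _⟩ <;>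
        rcases abs_cases b with ⟨hb', _⟩ | ⟨hb', _⟩ <;>
        [skip; skip; skip; skip; skip; skip; skip; skip] <;>
        nlinarith [hω.1, hω.2, abs_nonneg a, abs_nonneg b]
    calc s * (Y ω - μ) ≤ |s * (Y ω - μ)| := le_abs_self _
      _ = |s| * |Y ω - μ| := abs_mul _ _
      _ ≤ |s| * (|Y ω| + |μ|) := by
          apply mul_le_mul_of_nonneg_left (abs_sub _ _) (abs_nonneg s)
      _ ≤ |s| * (|a| + |b| + |μ|) := by
          apply mul_le_mul_of_nonneg_left (by linarith) (abs_nonneg s)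
  -- integrate
  have hint : ∫ ω, Real.exp (s * (Y ω - μ)) ∂P ≤ c1 + c2 * μ := by
    have hle : (fun ω => Real.exp (s * (Y ω - μ))) ≤ᵐ[P] ((fun _ => c1) + fun ω => c2 * Y ω) := by
      filter_upwards [hpt] with ω hω
      simpa using hω
    have h := integral_mono_ae hexpint ((integrable_const c1).add (hYint.const_mul c2)) hle
    simp only [Pi.add_apply] at h
    rw [integral_add (integrable_const c1) (hYint.const_mul c2)] at h
    simp only [integral_const, measure_univ, probReal_univ, ENNReal.toReal_one, smul_eq_mul, one_mul] at h
    rw [integral_const_mul] at h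
    exact h
  -- identify with hoeffding_core at t = -(s*(b-a))
  have hcore := hoeffding_core hp0 hp1 (-(s * (b - a)))
  have hmatch : c1 + c2 * μ
      = (1 - p) * Real.exp (-(s * (b - a)) * p) + p * Real.exp (-(-(s * (b - a))) * (1 - p)) := by
    rw [hc1, hc2, hp]
    have e1 : -(s * (b - a)) * ((μ - a) / (b - a)) = s * (a - μ) := by field_simp; ring
    have e2 : -(-(s * (b - a))) * (1 - (μ - a) / (b - a)) = s * (b - μ) := by field_simp; ring
    rw [e1, e2]
    field_simp
    ring
  have hfin : (-(s * (b - a)))^2 / 8 = s^2 * (b - a)^2 / 8 := by ring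
  calc ∫ ω, Real.exp (s * (Y ω - μ)) ∂P ≤ c1 + c2 * μ := hint
    _ ≤ Real.exp ((-(s * (b - a)))^2 / 8) := hmatch ▸ hcore
    _ = Real.exp (s^2 * (b - a)^2 / 8) := by rw [hfin]

end Hoeffding


/-- **Lemma 2 of the paper.** For a random vector `X` with entries almost surely in `[-V, V]`
and positive definite `Σ`, `Σ'`, the centered quadratic statistic
`Q − E[Q]` with `Q = Xᵀ(Σ⁻¹ − (Σ')⁻¹)X` is `(C V² n / 2)`-subgaussian, where
`C = 1/λ_min(Σ) + 1/λ_min(Σ')`. -/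
theorem centered_quadratic_statistic_subgaussian
    {Ω : Type*} [MeasurableSpace Ω] (P : Measure Ω) [IsProbabilityMeasure P]
    {n : ℕ} (hn : 1 ≤ n) (S S' : Matrix (Fin n) (Fin n) ℝ)
    (hS : S.PosDef) (hS' : S'.PosDef)
    (V : ℝ) (hV : 0 < V)
    (X : Ω → Fin n → ℝ) (hX : Measurable X)
    (hbdd : ∀ᵐ ω ∂P, ∀ i, X ω i ∈ Set.Icc (-V) V) :
    ∀ s : ℝ,
      ∫ ω, Real.exp (s * (X ω ⬝ᵥ (S⁻¹ - S'⁻¹).mulVec (X ω)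
          - ∫ ω', X ω' ⬝ᵥ (S⁻¹ - S'⁻¹).mulVec (X ω') ∂P)) ∂P
        ≤ Real.exp (s ^ 2 *
            ((1 / lamMin S + 1 / lamMin S') * V ^ 2 * n / 2) ^ 2 / 2) := by
  intro s
  set M : Matrix (Fin n) (Fin n) ℝ := S⁻¹ - S'⁻¹ with hM
  set Q : Ω → ℝ := fun ω => X ω ⬝ᵥ M.mulVec (X ω) with hQ
  have hlam : 0 < lamMin S := lamMin_pos hn hS
  have hlam' : 0 < lamMin S' := lamMin_pos hn hS'
  have hQmeas : Measurable Q := by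
    have : Q = fun ω => ∑ i, X ω i * ∑ j, M i j * X ω j := by
      funext ω
      simp [hQ, dotProduct, mulVec]
    rw [this]
    exact Finset.measurable_sum _ (fun i _ =>
      ((measurable_pi_apply i).comp hX).mul
        (Finset.measurable_sum _ (fun j _ =>
          measurable_const.mul ((measurable_pi_apply j).comp hX))))
  set a : ℝ := -((1 / lamMin S') * (V^2 * n)) with ha
  set b : ℝ := (1 / lamMin S) * (V^2 * n) with hb
  have hVn : (0:ℝ) < V^2 * n := by
    have : (0:ℝ) < (n:ℝ) := by exact_mod_cast hn
    positivity
  have hab : a < b := by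
    have h1 : 0 < (1 / lamMin S') * (V^2 * n) := by positivity
    have h2 : 0 < (1 / lamMin S) * (V^2 * n) := by positivity
    rw [ha, hb]; linarith
  have hQbdd : ∀ᵐ ω ∂P, Q ω ∈ Set.Icc a b := by
    filter_upwards [hbdd] with ω hω
    set x : Fin n → ℝ := X ω with hx
    have hxx : x ⬝ᵥ x ≤ V^2 * n := by
      have : x ⬝ᵥ x = ∑ i, x i * x i := rfl
      rw [this]
      calc ∑ i, x i * x i ≤ ∑ _i : Fin n, V^2 := by
            apply Finset.sum_le_sum
            intro i _
            have h1 := (hω i).1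
            have h2 := (hω i).2
            nlinarith
        _ = V^2 * n := by simp [mul_comm]
    have hQeq : Q ω = x ⬝ᵥ S⁻¹ *ᵥ x - x ⬝ᵥ S'⁻¹ *ᵥ x := by
      rw [hQ, hM]
      simp [sub_mulVec, dotProduct_sub]
      rfl
    have hq1 : x ⬝ᵥ S⁻¹ *ᵥ x ≤ (1 / lamMin S) * (V^2 * n) := by
      calc x ⬝ᵥ S⁻¹ *ᵥ x ≤ (1 / lamMin S) * (x ⬝ᵥ x) := quad_inv_le hn hS x
        _ ≤ (1 / lamMin S) * (V^2 * n) := by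
            apply mul_le_mul_of_nonneg_left hxx (by positivity)
    have hq2 : x ⬝ᵥ S'⁻¹ *ᵥ x ≤ (1 / lamMin S') * (V^2 * n) := by
      calc x ⬝ᵥ S'⁻¹ *ᵥ x ≤ (1 / lamMin S') * (x ⬝ᵥ x) := quad_inv_le hn hS' x
        _ ≤ (1 / lamMin S') * (V^2 * n) := by
            apply mul_le_mul_of_nonneg_left hxx (by positivity)
    have hn1 : 0 ≤ x ⬝ᵥ S⁻¹ *ᵥ x := quad_inv_nonneg hS x
    have hn2 : 0 ≤ x ⬝ᵥ S'⁻¹ *ᵥ x := quad_inv_nonneg hS' x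
    constructor
    · rw [hQeq, ha]; linarith
    · rw [hQeq, hb]; linarith
  have hmain := hoeffding_mgf P hQmeas hab hQbdd s
  have hba : b - a = (1 / lamMin S + 1 / lamMin S') * V ^ 2 * n := by
    rw [hb, ha]; ring
  have hexp : s^2 * (b - a)^2 / 8
      = s ^ 2 * ((1 / lamMin S + 1 / lamMin S') * V ^ 2 * n / 2) ^ 2 / 2 := by
    rw [hba]; ring
  rw [← hexp]
  exact hmain
end

section
/- Let t ≥ 1 be an integer, let δ₀, δ₁ ∈ (0, 1), and let 0 < ε_L < ε_U be reals. Let a ∈ ℝ and c₀, c₁, …, c_{t−1} ∈ ℝ with c₀ = a, and suppose that either ε_L ≤ a − c_r ≤ ε_U for all r ∈ {1, …, t−1}, or −ε_U ≤ a − c_r ≤ −ε_L for all r ∈ {1, …, t−1}. Let p₀, …, p_{t−1} ≥ 0 with ∑_{r=0}^{t−1} p_r = 1, and set α₀ = 1 − p₀ and E_BO = ∑_{r=0}^{t−1} c_r p_r. Let p'₁, …, p'_{t−1} ≥ 0 with ∑_{r=1}^{t−1} p'_r = 1, and set E' = ∑_{r=1}^{t−1} c_r p'_r. If ε_U / ε_L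 ≤ α₀ (1 + (1−δ₀)(1−δ₁)/(δ₀ δ₁)), then |a − E_BO| ≥ (1−δ₀)(1−δ₁)·0 + δ₀ δ₁ · |a − E'| + (1 − (1−δ₀)(1−δ₁) − δ₀ δ₁) · |a − E_BO|. -/
/-- **Theorem 4 of the paper (non-stationary case), in explicit form.**
At a change point, with prior prediction `a = E[x_t | ∅]`, run-length predictive means `c r`,
BOCPD run-length posterior `p` (with `α₀ = 1 - p 0`) and CBOCPD posterior `p'` used when the
change is not confirmed, if `εU / εL ≤ α₀ (1 + (1-δ₀)(1-δ₁)/(δ₀δ₁))` then the expected absolute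
prediction error of CBOCPD at the change point is at most that of BOCPD. -/
theorem cbocpd_gain_nonstationary
    (t : ℕ) (ht : 1 ≤ t) (δ₀ δ₁ : ℝ) (hδ₀ : δ₀ ∈ Set.Ioo (0 : ℝ) 1) (hδ₁ : δ₁ ∈ Set.Ioo (0 : ℝ) 1)
    (εL εU : ℝ) (hεL : 0 < εL) (hεLU : εL < εU)
    (a : ℝ) (c : ℕ → ℝ) (hc0 : c 0 = a)
    (hcase :
      (∀ r ∈ Finset.Ico 1 t, -εU ≤ a - c r ∧ a - c r ≤ -εL) ∨
      (∀ r ∈ Finset.Ico 1 t, εL ≤ a - c r ∧ a - c r ≤ εU))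
    (p : ℕ → ℝ) (hp : ∀ r ∈ Finset.range t, 0 ≤ p r)
    (hpsum : ∑ r ∈ Finset.range t, p r = 1)
    (p' : ℕ → ℝ) (hp' : ∀ r ∈ Finset.Ico 1 t, 0 ≤ p' r)
    (hp'sum : ∑ r ∈ Finset.Ico 1 t, p' r = 1)
    (hratio : εU / εL ≤ (1 - p 0) * (1 + (1 - δ₀) * (1 - δ₁) / (δ₀ * δ₁))) :
    |a - ∑ r ∈ Finset.range t, c r * p r| ≥
      (1 - δ₀) * (1 - δ₁) * 0
        + δ₀ * δ₁ * |a - ∑ r ∈ Finset.Ico 1 t, c r * p' r|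
        + (1 - (1 - δ₀) * (1 - δ₁) - δ₀ * δ₁) * |a - ∑ r ∈ Finset.range t, c r * p r| := by
  obtain ⟨hδ₀0, hδ₀1⟩ := hδ₀
  obtain ⟨hδ₁0, hδ₁1⟩ := hδ₁
  have hB0 : 0 < δ₀ * δ₁ := mul_pos hδ₀0 hδ₁0
  have hA0 : 0 < (1 - δ₀) * (1 - δ₁) := mul_pos (by linarith) (by linarith)
  have hmem : ∀ r ∈ Finset.Ico 1 t, r ∈ Finset.range t := by
    intro r hr
    simp only [Finset.mem_Ico] at hr
    simp only [Finset.mem_range]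
    omega
  have hsplit : ∀ f : ℕ → ℝ,
      ∑ r ∈ Finset.range t, f r = f 0 + ∑ r ∈ Finset.Ico 1 t, f r := by
    intro f
    rw [Finset.range_eq_Ico, Finset.sum_eq_sum_Ico_succ_bot ht]
  have hp0sum : p 0 + ∑ r ∈ Finset.Ico 1 t, p r = 1 := by
    rw [← hsplit]; exact hpsum
  have hα0 : 0 ≤ 1 - p 0 := by
    have : 0 ≤ ∑ r ∈ Finset.Ico 1 t, p r :=
      Finset.sum_nonneg fun r hr => hp r (hmem r hr)
    linarith
  have hDeq : a - ∑ r ∈ Finset.range t, c r * p r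
      = ∑ r ∈ Finset.Ico 1 t, (a - c r) * p r := by
    have h1 : ∑ r ∈ Finset.Ico 1 t, (a - c r) * p r
        = a * ∑ r ∈ Finset.Ico 1 t, p r - ∑ r ∈ Finset.Ico 1 t, c r * p r := by
      rw [Finset.mul_sum, ← Finset.sum_sub_distrib]
      exact Finset.sum_congr rfl fun r _ => by ring
    rw [hsplit (fun r => c r * p r), hc0, h1]
    have h4 : a * p 0 + a * ∑ r ∈ Finset.Ico 1 t, p r = a := by
      rw [← mul_add, hp0sum, mul_one]
    linarith
  have hD'eq : a - ∑ r ∈ Finset.Ico 1 t, c r * p' r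
      = ∑ r ∈ Finset.Ico 1 t, (a - c r) * p' r := by
    have h1 : ∑ r ∈ Finset.Ico 1 t, (a - c r) * p' r
        = a * ∑ r ∈ Finset.Ico 1 t, p' r - ∑ r ∈ Finset.Ico 1 t, c r * p' r := by
      rw [Finset.mul_sum, ← Finset.sum_sub_distrib]
      exact Finset.sum_congr rfl fun r _ => by ring
    rw [h1, hp'sum]; ring
  -- key inequality from the ratio hypothesis
  have hεU : εU ≤ (1 - p 0) * (1 + (1 - δ₀) * (1 - δ₁) / (δ₀ * δ₁)) * εL :=
    (div_le_iff₀ hεL).mp hratio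
  have hkey : δ₀ * δ₁ * (1 + (1 - δ₀) * (1 - δ₁) / (δ₀ * δ₁))
      = δ₀ * δ₁ + (1 - δ₀) * (1 - δ₁) := by
    field_simp
  -- bounds in each case
  have hmain : ∀ D D' : ℝ,
      (1 - p 0) * εL ≤ |D| → |D'| ≤ εU →
      |D| ≥ (1 - δ₀) * (1 - δ₁) * 0 + δ₀ * δ₁ * |D'|
        + (1 - (1 - δ₀) * (1 - δ₁) - δ₀ * δ₁) * |D| := by
    intro D D' hD hD'
    nlinarith [abs_nonneg D, abs_nonneg D',
      mul_le_mul_of_nonneg_left hεU (le_of_lt hB0),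
      mul_le_mul_of_nonneg_left hD' (le_of_lt hB0),
      mul_le_mul_of_nonneg_left hD (by positivity :
        (0:ℝ) ≤ δ₀ * δ₁ + (1 - δ₀) * (1 - δ₁))]
  rw [hDeq, hD'eq]
  rcases hcase with h | h
  · -- negative case: a - c r ∈ [-εU, -εL]
    apply hmain
    · have h1 : ∑ r ∈ Finset.Ico 1 t, (a - c r) * p r
          ≤ ∑ r ∈ Finset.Ico 1 t, (-εL) * p r := by
        apply Finset.sum_le_sum
        intro r hr
        exact mul_le_mul_of_nonneg_right (h r hr).2 (hp r (hmem r hr))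
      have h2 : ∑ r ∈ Finset.Ico 1 t, (-εL) * p r = -εL * (1 - p 0) := by
        rw [← Finset.mul_sum]
        have : ∑ r ∈ Finset.Ico 1 t, p r = 1 - p 0 := by linarith
        rw [this]
      have h3 : ∑ r ∈ Finset.Ico 1 t, (a - c r) * p r ≤ -εL * (1 - p 0) :=
        h1.trans_eq h2
      calc (1 - p 0) * εL ≤ -(∑ r ∈ Finset.Ico 1 t, (a - c r) * p r) := by nlinarith
        _ ≤ |∑ r ∈ Finset.Ico 1 t, (a - c r) * p r| := neg_le_abs _
    · rw [abs_le]
      constructor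
      · calc -εU = ∑ r ∈ Finset.Ico 1 t, (-εU) * p' r := by
              rw [← Finset.mul_sum, hp'sum, mul_one]
          _ ≤ _ := Finset.sum_le_sum fun r hr =>
              mul_le_mul_of_nonneg_right (h r hr).1 (hp' r hr)
      · calc ∑ r ∈ Finset.Ico 1 t, (a - c r) * p' r
            ≤ ∑ r ∈ Finset.Ico 1 t, (-εL) * p' r := Finset.sum_le_sum fun r hr =>
              mul_le_mul_of_nonneg_right (h r hr).2 (hp' r hr)
          _ = -εL := by rw [← Finset.mul_sum, hp'sum, mul_one]
          _ ≤ εU := by linarith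
  · -- positive case: a - c r ∈ [εL, εU]
    apply hmain
    · have h1 : ∑ r ∈ Finset.Ico 1 t, εL * p r
          ≤ ∑ r ∈ Finset.Ico 1 t, (a - c r) * p r := by
        apply Finset.sum_le_sum
        intro r hr
        exact mul_le_mul_of_nonneg_right (h r hr).1 (hp r (hmem r hr))
      have h2 : ∑ r ∈ Finset.Ico 1 t, εL * p r = εL * (1 - p 0) := by
        rw [← Finset.mul_sum]
        have : ∑ r ∈ Finset.Ico 1 t, p r = 1 - p 0 := by linarith
        rw [this]
      calc (1 - p 0) * εL ≤ ∑ r ∈ Finset.Ico 1 t, (a - c r) * p r := by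
            rw [mul_comm]; linarith [h2 ▸ h1]
        _ ≤ |∑ r ∈ Finset.Ico 1 t, (a - c r) * p r| := le_abs_self _
    · rw [abs_le]
      constructor
      · calc -εU ≤ εL := by linarith
          _ = ∑ r ∈ Finset.Ico 1 t, εL * p' r := by
              rw [← Finset.mul_sum, hp'sum, mul_one]
          _ ≤ _ := Finset.sum_le_sum fun r hr =>
              mul_le_mul_of_nonneg_right (h r hr).1 (hp' r hr)
      · calc ∑ r ∈ Finset.Ico 1 t, (a - c r) * p' r
            ≤ ∑ r ∈ Finset.Ico 1 t, εU * p' r := Finset.sum_le_sum fun r hr =>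
              mul_le_mul_of_nonneg_right (h r hr).2 (hp' r hr)
          _ = εU := by rw [← Finset.mul_sum, hp'sum, mul_one]
end

section
/- Let t ≥ 2 be an integer, let δ₀, δ₁ ∈ (0, 1), and let 0 < ε_L < ε_U be reals. Let m, a ∈ ℝ and c₀, c₁, …, c_{t−1} ∈ ℝ with c₀ = a and c_{t−1} = m, and suppose that either ε_L ≤ m − c_r ≤ ε_U for all r ∈ {0, …, t−2}, or −ε_U ≤ m − c_r ≤ −ε_L for all r ∈ {0, …, t−2}. Let p₀, …, p_{t−1} ≥ 0 with ∑_{r=0}^{t−1} p_r = 1, and set α = 1 − p_{t−1} and E_BO = ∑_{r=0}^{t−1} c_r p_r. Let p'₁, …, p'_{t−1} ≥ 0 with ∑_{r=1}^{t−1} p'_r = 1, and set β = 1 − p'_{t−1} and E' = ∑_{r=1}^{t−1} c_r p'_r. If ε_U / ε_L ≤ α ((1−δ₀)(1−δ₁) + δ₀δ₁) / (β (1−δ₀)(1−δ₁) + δ₀δ₁), then |m − E_BO| ≥ δ₀δ₁ · |m − a| + (1−δ₀)(1−δ₁) · |m − E'| + (1 − δ₀δ₁ − (1−δ₀)(1−δ₁))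 · |m − E_BO|. -/
/-- **Theorem 5 of the paper (stationary case), in explicit form.**
At a confirmed non-change point, with true predictive mean `m = c (t-1) = E[x_t | x_{1:t-1}]`,
prior prediction `a = c 0`, BOCPD run-length posterior `p` (with `α = 1 - p (t-1)`) and CBOCPD
posterior `p'` (with `β = 1 - p' (t-1)`), if
`εU / εL ≤ α((1-δ₀)(1-δ₁) + δ₀δ₁) / (β(1-δ₀)(1-δ₁) + δ₀δ₁)` then the expected absolute
prediction error of CBOCPD is at most that of BOCPD. -/
theorem cbocpd_gain_stationary
    (t : ℕ) (ht : 2 ≤ t) (δ₀ δ₁ : ℝ) (hδ₀ : δ₀ ∈ Set.Ioo (0 : ℝ) 1) (hδ₁ : δ₁ ∈ Set.Ioo (0 : ℝ) 1)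
    (εL εU : ℝ) (hεL : 0 < εL) (hεLU : εL < εU)
    (m a : ℝ) (c : ℕ → ℝ) (hc0 : c 0 = a) (hct : c (t - 1) = m)
    (hcase :
      (∀ r ∈ Finset.range (t - 1), εL ≤ m - c r ∧ m - c r ≤ εU) ∨
      (∀ r ∈ Finset.range (t - 1), -εU ≤ m - c r ∧ m - c r ≤ -εL))
    (p : ℕ → ℝ) (hp : ∀ r ∈ Finset.range t, 0 ≤ p r)
    (hpsum : ∑ r ∈ Finset.range t, p r = 1)
    (p' : ℕ → ℝ) (hp' : ∀ r ∈ Finset.Ico 1 t, 0 ≤ p' r)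
    (hp'sum : ∑ r ∈ Finset.Ico 1 t, p' r = 1)
    (hratio : εU / εL ≤
      (1 - p (t - 1)) * ((1 - δ₀) * (1 - δ₁) + δ₀ * δ₁) /
        ((1 - p' (t - 1)) * ((1 - δ₀) * (1 - δ₁)) + δ₀ * δ₁)) :
    |m - ∑ r ∈ Finset.range t, c r * p r| ≥
      δ₀ * δ₁ * |m - a|
        + (1 - δ₀) * (1 - δ₁) * |m - ∑ r ∈ Finset.Ico 1 t, c r * p' r|
        + (1 - δ₀ * δ₁ - (1 - δ₀) * (1 - δ₁)) * |m - ∑ r ∈ Finset.range t, c r * p r| := by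
  have h1t : 1 ≤ t - 1 := by omega
  have hts : t - 1 + 1 = t := by omega
  obtain ⟨hδ₀0, hδ₀1⟩ := hδ₀
  obtain ⟨hδ₁0, hδ₁1⟩ := hδ₁
  set D := δ₀ * δ₁ with hD
  set K := (1 - δ₀) * (1 - δ₁) with hK
  have hD0 : 0 < D := mul_pos hδ₀0 hδ₁0
  have hK0 : 0 < K := mul_pos (by linarith) (by linarith)
  -- α
  have hα : ∑ r ∈ Finset.range (t-1), p r = 1 - p (t-1) := by
    have h := Finset.sum_range_succ p (t-1)
    rw [hts, hpsum] at h
    linarith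
  have hα0 : 0 ≤ 1 - p (t-1) := by
    rw [← hα]
    exact Finset.sum_nonneg fun r hr => hp r (Finset.mem_range.2 (by
      have := Finset.mem_range.1 hr; omega))
  -- β
  have hβ : ∑ r ∈ Finset.Ico 1 (t-1), p' r = 1 - p' (t-1) := by
    have h := Finset.sum_Ico_succ_top h1t p'
    rw [hts, hp'sum] at h
    linarith
  have hβ0 : 0 ≤ 1 - p' (t-1) := by
    rw [← hβ]
    exact Finset.sum_nonneg fun r hr => hp' r (by
      rcases Finset.mem_Ico.1 hr with ⟨h1, h2⟩
      exact Finset.mem_Ico.2 ⟨h1, by omega⟩)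
  -- rewrite errors as sums
  have hEBO : m - ∑ r ∈ Finset.range t, c r * p r
      = ∑ r ∈ Finset.range (t-1), (m - c r) * p r := by
    have h1 : ∑ r ∈ Finset.range t, (m - c r) * p r
        = m - ∑ r ∈ Finset.range t, c r * p r := by
      simp only [sub_mul, Finset.sum_sub_distrib, ← Finset.mul_sum, hpsum, mul_one]
    have h2 : ∑ r ∈ Finset.range t, (m - c r) * p r
        = ∑ r ∈ Finset.range (t-1), (m - c r) * p r := by
      rw [← hts, Finset.sum_range_succ, hct]
      simp
    rw [← h1, h2]
  have hE' : m - ∑ r ∈ Finset.Ico 1 t, c r * p' r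
      = ∑ r ∈ Finset.Ico 1 (t-1), (m - c r) * p' r := by
    have h1 : ∑ r ∈ Finset.Ico 1 t, (m - c r) * p' r
        = m - ∑ r ∈ Finset.Ico 1 t, c r * p' r := by
      simp only [sub_mul, Finset.sum_sub_distrib, ← Finset.mul_sum, hp'sum, mul_one]
    have h2 : ∑ r ∈ Finset.Ico 1 t, (m - c r) * p' r
        = ∑ r ∈ Finset.Ico 1 (t-1), (m - c r) * p' r := by
      rw [← hts, Finset.sum_Ico_succ_top h1t, hct]
      simp
    rw [← h1, h2]
  -- key ratio inequality
  have hden : 0 < (1 - p' (t-1)) * K + D := by positivity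
  have hkey : εU * ((1 - p' (t-1)) * K + D) ≤ (1 - p (t-1)) * (K + D) * εL := by
    rw [div_le_div_iff₀ hεL hden] at hratio
    linarith
  -- bounds on the three absolute errors
  have hmem : ∀ r ∈ Finset.Ico 1 (t-1), r ∈ Finset.range (t-1) := fun r hr =>
    Finset.mem_range.2 (Finset.mem_Ico.1 hr).2
  have hp'nn : ∀ r ∈ Finset.Ico 1 (t-1), 0 ≤ p' r := fun r hr => by
    rcases Finset.mem_Ico.1 hr with ⟨h1, h2⟩
    exact hp' r (Finset.mem_Ico.2 ⟨h1, by omega⟩)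
  have hpnn : ∀ r ∈ Finset.range (t-1), 0 ≤ p r := fun r hr =>
    hp r (Finset.mem_range.2 (by have := Finset.mem_range.1 hr; omega))
  have hbo : εL * (1 - p (t-1)) ≤ |m - ∑ r ∈ Finset.range t, c r * p r| := by
    rw [hEBO]
    rcases hcase with hpos | hneg
    · have h1 : ∑ r ∈ Finset.range (t-1), εL * p r
          ≤ ∑ r ∈ Finset.range (t-1), (m - c r) * p r :=
        Finset.sum_le_sum fun r hr =>
          mul_le_mul_of_nonneg_right (hpos r hr).1 (hpnn r hr)
      rw [← Finset.mul_sum, hα] at h1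
      exact le_trans h1 (le_abs_self _)
    · have h1 : ∑ r ∈ Finset.range (t-1), (m - c r) * p r
          ≤ ∑ r ∈ Finset.range (t-1), (-εL) * p r :=
        Finset.sum_le_sum fun r hr =>
          mul_le_mul_of_nonneg_right (hneg r hr).2 (hpnn r hr)
      rw [← Finset.mul_sum, hα] at h1
      calc εL * (1 - p (t-1)) ≤ -(∑ r ∈ Finset.range (t-1), (m - c r) * p r) := by linarith
        _ ≤ |∑ r ∈ Finset.range (t-1), (m - c r) * p r| := neg_le_abs _
  have hcb : |m - ∑ r ∈ Finset.Ico 1 t, c r * p' r| ≤ εU * (1 - p' (t-1)) := by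
    rw [hE']
    rcases hcase with hpos | hneg
    · have h2 : ∑ r ∈ Finset.Ico 1 (t-1), (m - c r) * p' r
          ≤ ∑ r ∈ Finset.Ico 1 (t-1), εU * p' r :=
        Finset.sum_le_sum fun r hr =>
          mul_le_mul_of_nonneg_right (hpos r (hmem r hr)).2 (hp'nn r hr)
      rw [← Finset.mul_sum, hβ] at h2
      have h3 : 0 ≤ ∑ r ∈ Finset.Ico 1 (t-1), (m - c r) * p' r :=
        Finset.sum_nonneg fun r hr =>
          mul_nonneg (le_trans hεL.le (hpos r (hmem r hr)).1) (hp'nn r hr)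
      rw [abs_of_nonneg h3]; exact h2
    · have h2 : ∑ r ∈ Finset.Ico 1 (t-1), (-εU) * p' r
          ≤ ∑ r ∈ Finset.Ico 1 (t-1), (m - c r) * p' r :=
        Finset.sum_le_sum fun r hr =>
          mul_le_mul_of_nonneg_right (hneg r (hmem r hr)).1 (hp'nn r hr)
      rw [← Finset.mul_sum, hβ] at h2
      have h3 : ∑ r ∈ Finset.Ico 1 (t-1), (m - c r) * p' r ≤ 0 :=
        Finset.sum_nonpos fun r hr =>
          mul_nonpos_of_nonpos_of_nonneg
            (by linarith [(hneg r (hmem r hr)).2]) (hp'nn r hr)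
      rw [abs_of_nonpos h3]; linarith
  have ha : |m - a| ≤ εU := by
    have h0 : (0 : ℕ) ∈ Finset.range (t-1) := Finset.mem_range.2 (by omega)
    rw [← hc0]
    rcases hcase with hpos | hneg
    · rcases hpos 0 h0 with ⟨h1, h2⟩
      rw [abs_of_nonneg (by linarith)]; exact h2
    · rcases hneg 0 h0 with ⟨h1, h2⟩
      rw [abs_of_nonpos (by linarith)]; linarith
  nlinarith [mul_le_mul_of_nonneg_left hcb hK0.le,
    mul_le_mul_of_nonneg_left ha hD0.le,
    mul_le_mul_of_nonneg_left hbo (by positivity : (0:ℝ) ≤ K + D)]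
end
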